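/- Let E be a finite-dimensional real Banach lattice, F a real Banach lattice, and T : E → F a positive bounded linear operator which is ε-strongly disjointness preserving. Then there exists a disjointness preserving linear operator S : E → F such that 0 ≤ S ≤ T and ‖T − S‖ ≤ 2ε. -/

import Mathlib

open Finset


section lat
variable {A : Type*} [NormedAddCommGroup A] [Lattice A] [HasSolidNorm A] [IsOrderedAddMonoid A]

lemma aux_riesz_inf {a b c : A} (ha : 0 ≤ a) (hb : 0 ≤ b) (hc : 0 ≤ c) :
    (a + b) ⊓ c ≤ a ⊓ c + b ⊓ c := by
  have h : a ⊓ c + b ⊓ c = ((a+b) ⊓ (a+c)) ⊓ ((c+b) ⊓ (c+c)) := by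
    rw [inf_add, add_inf, add_inf]
  rw [h]
  refine le_inf (le_inf inf_le_left ?_) (le_inf ?_ ?_)
  · exact inf_le_right.trans (le_add_of_nonneg_left ha)
  · exact inf_le_right.trans (le_add_of_nonneg_right hb)
  · exact inf_le_right.trans (le_add_of_nonneg_left hc)

lemma aux_sum_inf_zero {ι : Type*} {s : Finset ι} {a : ι → A} {c : A}
    (ha : ∀ i ∈ s, 0 ≤ a i) (hc : 0 ≤ c) (h : ∀ i ∈ s, a i ⊓ c = 0) :
    (∑ i ∈ s, a i) ⊓ c = 0 := by
  induction s using Finset.cons_induction with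
  | empty => simpa using inf_of_le_left hc
  | cons i s his ih =>
    rw [Finset.sum_cons]
    have hsum : 0 ≤ ∑ j ∈ s, a j := Finset.sum_nonneg fun j hj => ha j (Finset.mem_cons_of_mem hj)
    refine le_antisymm ?_ (le_inf (add_nonneg (ha i (Finset.mem_cons_self _ _)) hsum) hc)
    calc (a i + ∑ j ∈ s, a j) ⊓ c ≤ a i ⊓ c + (∑ j ∈ s, a j) ⊓ c :=
          aux_riesz_inf (ha i (Finset.mem_cons_self _ _)) hsum hc
      _ = 0 := by
          rw [h i (Finset.mem_cons_self _ _), ih (fun j hj => ha j (Finset.mem_cons_of_mem hj))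
            (fun j hj => h j (Finset.mem_cons_of_mem hj))]
          simp

lemma aux_two_nsmul_sup (a b : A) : (a ⊔ b) + (a ⊔ b) = (a + a) ⊔ (b + b) := by
  have h1 : a + b ≤ (a + a) ⊔ (b + b) := by
    rw [← sub_nonneg]
    have h2 : (a + a) ⊔ (b + b) - (a + b) = (a - b) ⊔ (b - a) := by
      rw [sup_sub]; congr 1 <;> abel
    have h3 : (a - b) ⊔ (b - a) = |a - b| := by
      rw [abs]; congr 1; abel
    rw [h2, h3]; exact abs_nonneg (a - b)
  calc (a ⊔ b) + (a ⊔ b) = ((a ⊔ b) + a) ⊔ ((a ⊔ b) + b) := add_sup _ _ _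
    _ = ((a + a) ⊔ (b + a)) ⊔ ((a + b) ⊔ (b + b)) := by rw [sup_add, sup_add]
    _ = (a + a) ⊔ (b + b) := by
        refine le_antisymm (sup_le (sup_le le_sup_left ?_) (sup_le h1 le_sup_right))
          (sup_le (le_sup_left.trans le_sup_left) (le_sup_right.trans le_sup_right))
        rw [add_comm b a]; exact h1

lemma aux_abs_sub_of_disjoint {u v : A} (hu : 0 ≤ u) (hv : 0 ≤ v) (huv : u ⊓ v = 0) :
    |u - v| = u + v := by
  have h1 : |u - v| = (u - v) ⊔ (v - u) := by rw [abs]; congr 1; abel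
  have h2 : ((u - v) ⊔ (v - u)) + (u + v) = (u + u) ⊔ (v + v) := by
    rw [sup_add]; congr 1 <;> abel
  have h3 := aux_two_nsmul_sup u v
  have h4 : (u ⊔ v) = u + v := by
    have := inf_add_sup u v
    rw [huv, zero_add] at this; exact this
  rw [h1, ← add_right_cancel_iff (a := u + v), h2, ← h3, h4]

end lat

section lat2
variable {A : Type*} [NormedAddCommGroup A] [Lattice A] [HasSolidNorm A] [IsOrderedAddMonoid A]

lemma aux_sup'_add_self {ι : Type*} (s : Finset ι) (hs : s.Nonempty) (f : ι → A) :
    s.sup' hs (fun i => f i + f i) = s.sup' hs f + s.sup' hs f := by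
  induction hs using Finset.Nonempty.cons_induction with
  | singleton i => simp
  | cons i s his hs ih =>
    rw [Finset.sup'_cons (H := hs), Finset.sup'_cons (H := hs), ih, aux_two_nsmul_sup]

lemma aux_claimK {ι : Type*} [DecidableEq ι] (s : Finset ι) (hs : s.Nonempty) (a : ι → A)
    (ha : ∀ i ∈ s, 0 ≤ a i) :
    (∑ i ∈ s, (a i ⊓ (∑ j ∈ s.erase i, a j))) + (s.sup' hs a + s.sup' hs a)
      ≤ (∑ i ∈ s, a i) + (∑ i ∈ s, a i) := by
  set A0 := ∑ i ∈ s, a i with hA0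
  set b : ι → A := fun i => ∑ j ∈ s.erase i, a j with hbdef
  have hb : ∀ i ∈ s, b i = A0 - a i := by
    intro i hi
    rw [eq_sub_iff_add_eq, add_comm, hA0, hbdef]
    exact Finset.add_sum_erase s a hi
  set m : ℕ := s.card - 1 with hm
  set R := ∑ i ∈ s, (a i ⊔ b i) with hR
  have hcard : ∀ k ∈ s, (s.erase k).card = m := fun k hk => Finset.card_erase_of_mem hk
  have h1 : ∀ k ∈ s, (a k + a k) + m • A0 ≤ R + A0 := by
    intro k hk
    have e1 : a k + ∑ i ∈ s.erase k, b i ≤ R := by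
      rw [hR, ← Finset.add_sum_erase s _ hk]
      exact add_le_add le_sup_left (Finset.sum_le_sum fun i hi => le_sup_right)
    have e2 : ∑ i ∈ s.erase k, b i = m • A0 - (A0 - a k) := by
      rw [Finset.sum_congr rfl (fun i hi => hb i (Finset.mem_of_mem_erase hi)),
        Finset.sum_sub_distrib, Finset.sum_const, hcard k hk]
      congr 1
      exact hb k hk
    rw [e2] at e1
    calc (a k + a k) + m • A0 = (a k + (m • A0 - (A0 - a k))) + A0 := by abel
      _ ≤ R + A0 := add_le_add_left e1 A0
  have h2 : (s.sup' hs a + s.sup' hs a) + m • A0 ≤ R + A0 := by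
    have := Finset.sup'_le hs (fun k => a k + a k)
      (a := R + A0 - m • A0) (fun k hk => by
        rw [le_sub_iff_add_le]; exact h1 k hk)
    rw [aux_sup'_add_self] at this
    rwa [← le_sub_iff_add_le]
  have h3 : ∑ i ∈ s, (a i ⊓ b i) = s.card • A0 - R := by
    have e : ∀ i ∈ s, a i ⊓ b i = (a i + b i) - (a i ⊔ b i) := by
      intro i hi
      rw [eq_sub_iff_add_eq, inf_add_sup]
    rw [Finset.sum_congr rfl e, Finset.sum_sub_distrib, ← hR, Finset.sum_add_distrib, ← hA0,
      Finset.sum_congr rfl hb, Finset.sum_sub_distrib, Finset.sum_const, ← hA0]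
    abel
  have hn : s.card = m + 1 := by
    rw [hm, Nat.sub_add_cancel (Finset.card_pos.2 hs)]
  rw [h3, hn]
  calc (m + 1) • A0 - R + (s.sup' hs a + s.sup' hs a)
      = ((s.sup' hs a + s.sup' hs a) + m • A0) + A0 - R := by
        rw [add_nsmul, one_nsmul]; abel
    _ ≤ (R + A0) + A0 - R := by
        refine sub_le_sub_right (add_le_add_left h2 A0) R
    _ = A0 + A0 := by abel

end lat2


section mod
variable {E : Type*} [NormedAddCommGroup E] [Lattice E] [HasSolidNorm E] [IsOrderedAddMonoid E] [NormedSpace ℝ E]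



lemma aux_smul_nonneg {c : ℝ} {x : E} (hc : 0 ≤ c) (hx : 0 ≤ x) : 0 ≤ c • x := by
  have hpow2 : ∀ (k : ℕ) (y : E), 0 ≤ (2^k : ℕ) • y → 0 ≤ y := by
    intro k
    induction k with
    | zero => intro y hy; simpa using hy
    | succ n ih =>
      intro y hy
      refine nsmul_two_semiclosed (ih (2 • y) ?_)
      rwa [smul_smul, ← pow_succ]
  have hq : ∀ k : ℕ, 0 ≤ ((⌊c * 2^k⌋₊ : ℝ) / 2^k) • x := by
    intro k
    refine hpow2 k _ ?_
    rw [← Nat.cast_smul_eq_nsmul ℝ, smul_smul]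
    have h2 : ((2:ℝ))^k ≠ 0 := by positivity
    have h3 : ((2^k : ℕ) : ℝ) * ((⌊c * 2^k⌋₊ : ℝ) / 2^k) = (⌊c * 2^k⌋₊ : ℝ) := by
      push_cast; field_simp
    rw [h3, Nat.cast_smul_eq_nsmul]
    exact nsmul_nonneg hx _
  have htend : Filter.Tendsto (fun k : ℕ => ((⌊c * 2^k⌋₊ : ℝ) / 2^k) • x)
      Filter.atTop (nhds (c • x)) := by
    refine Filter.Tendsto.smul_const ?_ x
    have hbound : ∀ k : ℕ, ‖((⌊c * 2^k⌋₊ : ℝ) / 2^k) - c‖ ≤ (1/2:ℝ)^k := by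
      intro k
      have h2 : (0:ℝ) < 2^k := by positivity
      have h4 : (⌊c * 2^k⌋₊ : ℝ) ≤ c * 2^k := Nat.floor_le (by positivity)
      have h5 : c * 2^k < (⌊c * 2^k⌋₊ : ℝ) + 1 := Nat.lt_floor_add_one _
      have hcanc : ((1:ℝ)/2^k) * 2^k = 1 := by field_simp
      have hhalf : ((1:ℝ)/2)^k = 1/2^k := by rw [div_pow]; norm_num
      rw [Real.norm_eq_abs, abs_le, hhalf]
      constructor
      · rw [neg_le, neg_sub, sub_le_iff_le_add, ← add_div, le_div_iff₀ h2]
        nlinarith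
      · rw [sub_le_iff_le_add, div_le_iff₀ h2]; nlinarith
    have h3 : Filter.Tendsto (fun k : ℕ => ((1:ℝ)/2)^k) Filter.atTop (nhds 0) :=
      tendsto_pow_atTop_nhds_zero_of_lt_one (by norm_num) (by norm_num)
    have h6 := squeeze_zero_norm hbound h3
    have h7 := h6.add (tendsto_const_nhds (x := c))
    simpa using h7
  exact isClosed_nonneg.mem_of_tendsto htend (Filter.Eventually.of_forall hq)



lemma aux_smul_le_smul {r t : ℝ} {x : E} (h : r ≤ t) (hx : 0 ≤ x) : r • x ≤ t • x := by
  have := aux_smul_nonneg (sub_nonneg.2 h) hx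
  rw [sub_smul] at this
  exact sub_nonneg.1 this

lemma aux_smul_disjoint {x y : E} (hx : 0 ≤ x) (hy : 0 ≤ y) (h : x ⊓ y = 0)
    {r t : ℝ} (hr : 0 ≤ r) (ht : 0 ≤ t) : (r • x) ⊓ (t • y) = 0 := by
  obtain ⟨n, hn⟩ := exists_nat_ge (max r t)
  have hnx : ∀ {c : ℝ} (z : E), 0 ≤ z → c ≤ n → 0 ≤ c → c • z ≤ n • z := by
    intro c z hz hc hc0
    rw [← Nat.cast_smul_eq_nsmul ℝ]
    exact aux_smul_le_smul hc hz
  have h1 : (n • x) ⊓ y = 0 := by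
    have := aux_sum_inf_zero (s := Finset.range n) (a := fun _ => x) (c := y)
      (fun i _ => hx) hy (fun i _ => h)
    simpa using this
  have h2 : (n • x) ⊓ (n • y) = 0 := by
    have := aux_sum_inf_zero (s := Finset.range n) (a := fun _ => y) (c := n • x)
      (fun i _ => hy) (nsmul_nonneg hx n) (fun i _ => by rw [inf_comm]; exact h1)
    simpa [inf_comm] using this
  refine le_antisymm ?_ (le_inf (aux_smul_nonneg hr hx) (aux_smul_nonneg ht hy))
  calc (r • x) ⊓ (t • y) ≤ (n • x) ⊓ (n • y) :=
        inf_le_inf (hnx x hx (le_trans (le_max_left r t) hn) hr)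
          (hnx y hy (le_trans (le_max_right r t) hn) ht)
    _ = 0 := h2

lemma aux_abs_smul (c : ℝ) (z : E) : |c • z| = |c| • |z| := by
  have key : ∀ (c : ℝ), 0 ≤ c → ∀ z : E, |c • z| = c • |z| := by
    intro c hc z
    have hz : z = z⁺ - z⁻ := (posPart_sub_negPart z).symm
    have hd : z⁺ ⊓ z⁻ = 0 := posPart_inf_negPart_eq_zero z
    have h1 : c • z = c • z⁺ - c • z⁻ := by rw [← smul_sub, ← hz]
    rw [h1, aux_abs_sub_of_disjoint (aux_smul_nonneg hc (posPart_nonneg z))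
      (aux_smul_nonneg hc (negPart_nonneg z))
      (aux_smul_disjoint (posPart_nonneg z) (negPart_nonneg z) hd hc hc),
      ← smul_add]
    congr 1
    rw [posPart_add_negPart]
  rcases le_or_gt 0 c with hc | hc
  · rw [key c hc z, abs_of_nonneg hc]
  · have : |c • z| = |(-c) • (-z)| := by rw [smul_neg, neg_smul, neg_neg]
    rw [this, key (-c) (by linarith) (-z), abs_neg, abs_of_neg hc]

def auxOrtho (w : E) (hw : 0 ≤ w) : Submodule ℝ E where
  carrier := {z : E | |z| ⊓ w = 0}
  zero_mem' := by
    show |(0:E)| ⊓ w = 0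
    rw [abs_zero, inf_eq_left.2 hw]
  add_mem' := by
    intro a b ha hb
    refine le_antisymm ?_ (le_inf (abs_nonneg _) hw)
    calc |a + b| ⊓ w ≤ (|a| + |b|) ⊓ w := inf_le_inf_right w (abs_add_le a b)
      _ ≤ |a| ⊓ w + |b| ⊓ w := aux_riesz_inf (abs_nonneg a) (abs_nonneg b) hw
      _ = 0 := by rw [Set.mem_setOf_eq.mp ha, Set.mem_setOf_eq.mp hb, add_zero]
  smul_mem' := by
    intro c z hz
    simp only [Set.mem_setOf_eq] at hz ⊢
    rw [aux_abs_smul]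
    have := aux_smul_disjoint (abs_nonneg z) hw hz (abs_nonneg c) (zero_le_one (α := ℝ))
    rwa [one_smul] at this

def AuxAtom (e : E) : Prop := 0 < e ∧ ∀ y : E, 0 ≤ y → y ≤ e → ∃ t : ℝ, y = t • e

lemma aux_smul_nonpos {c : ℝ} {x : E} (hc : c ≤ 0) (hx : 0 ≤ x) : c • x ≤ 0 := by
  have := aux_smul_nonneg (neg_nonneg.2 hc) hx
  rw [neg_smul] at this
  exact neg_nonneg.mp this

lemma aux_bddAbove {x y : E} (hx : 0 < x) : BddAbove {t : ℝ | t • x ≤ y} := by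
  refine ⟨‖y‖ / ‖x‖, fun t ht => ?_⟩
  rcases le_or_gt t 0 with h | h
  · exact h.trans (by positivity)
  · have h1 : 0 ≤ t • x := aux_smul_nonneg h.le hx.le
    have h2 : |t • x| ≤ |y| := by
      rw [abs_of_nonneg h1]
      exact le_trans ht (le_abs_self y)
    have h3 := norm_le_norm_of_abs_le_abs h2
    rw [norm_smul, Real.norm_eq_abs, abs_of_pos h] at h3
    have hxn : 0 < ‖x‖ := norm_pos_iff.2 (ne_of_gt hx)
    rw [le_div_iff₀ hxn]
    exact h3

lemma aux_split {x : E} (hx : 0 < x) (hnot : ¬ AuxAtom x) :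
    ∃ u v : E, 0 < u ∧ 0 < v ∧ u ≤ x ∧ v ≤ x ∧ u ⊓ v = 0 := by
  obtain ⟨y, hy0, hyx, hy⟩ : ∃ y : E, 0 ≤ y ∧ y ≤ x ∧ ∀ t : ℝ, y ≠ t • x := by
    by_contra hcon
    push_neg at hcon
    exact hnot ⟨hx, fun y h1 h2 => hcon y h1 h2⟩
  -- find t with both parts nonzero
  obtain ⟨t, hu0, hv0⟩ : ∃ t : ℝ, ¬ (y ≤ t • x) ∧ ¬ (t • x ≤ y) := by
    by_contra hcon
    push_neg at hcon
    have hdich : ∀ t : ℝ, y ≤ t • x ∨ t • x ≤ y := by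
      intro t
      rcases Classical.em (y ≤ t • x) with h | h
      · exact Or.inl h
      · exact Or.inr (hcon t h)
    set S := {t : ℝ | t • x ≤ y} with hS
    have hS0 : (0:ℝ) ∈ S := by simp [hS, hy0]
    have hSbdd : BddAbove S := aux_bddAbove hx
    have hSclosed : IsClosed S := by
      have : S = (fun t : ℝ => t • x) ⁻¹' (Set.Iic y) := rfl
      rw [this]
      exact (isClosed_Iic).preimage (continuous_id.smul continuous_const)
    have hSne : S.Nonempty := ⟨0, hS0⟩
    set t0 := sSup S with ht0
    have ht0S : t0 ∈ S := hSclosed.csSup_mem hSne hSbdd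
    have hupper : y ≤ t0 • x := by
      have hseq : ∀ n : ℕ, y ≤ (t0 + 1/(n+1)) • x := by
        intro n
        rcases hdich (t0 + 1/(n+1)) with h | h
        · exact h
        · exfalso
          have : t0 + 1/(n+1) ≤ t0 := le_csSup hSbdd h
          have hp : (0:ℝ) < 1/(n+1) := by positivity
          linarith
      have htt : Filter.Tendsto (fun n : ℕ => (t0 + 1/(n+1)) • x) Filter.atTop
          (nhds (t0 • x)) := by
        refine Filter.Tendsto.smul_const ?_ x
        have := tendsto_one_div_add_atTop_nhds_zero_nat (𝕜 := ℝ)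
        have h2 := Filter.Tendsto.add (tendsto_const_nhds (x := t0)) this
        simpa using h2
      exact ge_of_tendsto' htt (fun n => hseq n)
    exact hy t0 (le_antisymm hupper ht0S)
  have ht : 0 < t := by
    by_contra h
    push_neg at h
    exact hv0 ((aux_smul_nonpos h hx.le).trans hy0)
  set u := (y - t • x) ⊔ 0 with hu
  set v0 := (t • x - y) ⊔ 0 with hv
  have hu_pos : 0 < u := by
    rcases lt_or_eq_of_le (le_sup_right : (0:E) ≤ u) with h | h
    · exact h
    · exact absurd (sub_nonpos.1 (sup_eq_right.1 h.symm)) hu0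
  have hv0_pos : 0 < v0 := by
    rcases lt_or_eq_of_le (le_sup_right : (0:E) ≤ v0) with h | h
    · exact h
    · exact absurd (sub_nonpos.1 (sup_eq_right.1 h.symm)) hv0
  have huv : u ⊓ v0 = 0 := by
    have h1 : u = (y - t • x)⁺ := rfl
    have h2 : v0 = (y - t • x)⁻ := by
      rw [hv, negPart_def, neg_sub]
    rw [h1, h2]
    exact posPart_inf_negPart_eq_zero _
  have hux : u ≤ x := by
    rw [hu, sup_le_iff]
    constructor
    · have : y - t • x ≤ y := by
        have := aux_smul_nonneg ht.le hx.le
        have h3 : y - t • x ≤ y - 0 := by exact sub_le_sub_left this y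
        simpa using h3
      exact this.trans hyx
    · exact hx.le
  have hvtx : v0 ≤ t • x := by
    rw [hv, sup_le_iff]
    constructor
    · have : t • x - y ≤ t • x - 0 := sub_le_sub_left hy0 _
      simpa using this
    · exact aux_smul_nonneg ht.le hx.le
  set r := min 1 (1/t) with hr
  have hrpos : 0 < r := by
    rw [hr]; positivity
  have hrv : r • v0 ≤ v0 ⊓ x := by
    refine le_inf ?_ ?_
    · have h9 := aux_smul_le_smul (min_le_left 1 (1/t)) hv0_pos.le
      rw [one_smul] at h9
      exact h9
    · calc r • v0 ≤ r • (t • x) := by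
            have := aux_smul_nonneg hrpos.le (sub_nonneg.2 hvtx)
            rw [smul_sub] at this
            exact sub_nonneg.1 this
        _ = (r * t) • x := by rw [smul_smul]
        _ ≤ 1 • x := aux_smul_le_smul (by
            have h8 : r ≤ 1/t := min_le_right _ _
            calc r * t ≤ (1/t) * t := mul_le_mul_of_nonneg_right h8 ht.le
              _ = 1 := by field_simp) hx.le
        _ = x := one_smul ℝ x
  refine ⟨u, v0 ⊓ x, hu_pos, ?_, hux, inf_le_right, ?_⟩
  · rcases lt_or_eq_of_le (le_inf hv0_pos.le hx.le) with h | h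
    · exact h
    · exfalso
      have : r • v0 ≤ 0 := hrv.trans_eq h.symm
      have h2 : r • v0 = 0 := le_antisymm this (aux_smul_nonneg hrpos.le hv0_pos.le)
      rw [smul_eq_zero] at h2
      rcases h2 with h2 | h2
      · exact absurd h2 (ne_of_gt hrpos)
      · exact absurd h2 (ne_of_gt hv0_pos)
  · refine le_antisymm ?_ (le_inf hu_pos.le (le_inf hv0_pos.le hx.le))
    calc u ⊓ (v0 ⊓ x) ≤ u ⊓ v0 := inf_le_inf_left u inf_le_left
      _ = 0 := huv

lemma aux_span_disjoint {v : E} (hv : 0 ≤ v) {G : Set E} (hG : ∀ g ∈ G, |g| ⊓ v = 0)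
    {z : E} (hz : z ∈ Submodule.span ℝ G) : |z| ⊓ v = 0 := by
  have : z ∈ auxOrtho v hv := by
    have hle : Submodule.span ℝ G ≤ auxOrtho v hv := by
      rw [Submodule.span_le]
      intro g hg
      exact hG g hg
    exact hle hz
  exact this

variable [FiniteDimensional ℝ E]

lemma aux_atom_below {x : E} (hx : 0 < x) : ∃ e : E, AuxAtom e ∧ e ≤ x := by
  set Wf : E → ℕ := fun z => Module.finrank ℝ (Submodule.span ℝ {y : E | 0 ≤ y ∧ y ≤ z}) with hWf
  suffices H : ∀ (N : ℕ) (z : E), 0 < z → Wf z ≤ N → ∃ e : E, AuxAtom e ∧ e ≤ z by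
    exact H (Wf x) x hx le_rfl
  intro N
  induction N with
  | zero =>
    intro z hz hWz
    exfalso
    have hzmem : z ∈ Submodule.span ℝ {y : E | 0 ≤ y ∧ y ≤ z} :=
      Submodule.subset_span ⟨hz.le, le_rfl⟩
    have : Submodule.span ℝ {y : E | 0 ≤ y ∧ y ≤ z} = ⊥ := by
      exact Submodule.finrank_eq_zero.mp (Nat.le_zero.mp hWz)
    rw [this, Submodule.mem_bot] at hzmem
    exact hz.ne' hzmem
  | succ N ih =>
    intro z hz hWz
    by_cases hat : AuxAtom z
    · exact ⟨z, hat, le_rfl⟩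
    obtain ⟨u, v, hu, hv, hux, hvx, huv⟩ := aux_split hz hat
    -- W u < W z
    have hle : Submodule.span ℝ {y : E | 0 ≤ y ∧ y ≤ u} ≤
        Submodule.span ℝ {y : E | 0 ≤ y ∧ y ≤ z} := by
      apply Submodule.span_mono
      intro y hy
      exact ⟨hy.1, hy.2.trans hux⟩
    have hvmem : v ∈ Submodule.span ℝ {y : E | 0 ≤ y ∧ y ≤ z} :=
      Submodule.subset_span ⟨hv.le, hvx⟩
    have hvnmem : v ∉ Submodule.span ℝ {y : E | 0 ≤ y ∧ y ≤ u} := by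
      intro hmem
      have h0 : |v| ⊓ v = 0 := by
        refine aux_span_disjoint hv.le ?_ hmem
        intro g hg
        rw [abs_of_nonneg hg.1]
        refine le_antisymm ?_ (le_inf hg.1 hv.le)
        calc g ⊓ v ≤ u ⊓ v := inf_le_inf_right v hg.2
          _ = 0 := huv
      rw [abs_of_nonneg hv.le, inf_idem] at h0
      exact hv.ne' h0
    have hlt : Submodule.span ℝ {y : E | 0 ≤ y ∧ y ≤ u} <
        Submodule.span ℝ {y : E | 0 ≤ y ∧ y ≤ z} :=
      lt_of_le_of_ne hle (fun h => hvnmem (h ▸ hvmem))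
    have hrank : Wf u < Wf z := Submodule.finrank_lt_finrank_of_lt hlt
    obtain ⟨e, he, heu⟩ := ih u hu (by omega)
    exact ⟨e, he, heu.trans hux⟩

lemma aux_atom_decomp {e x : E} (he : AuxAtom e) (hx : 0 ≤ x) :
    ∃ t : ℝ, 0 ≤ t ∧ t • e ≤ x ∧ (x - t • e) ⊓ e = 0 := by
  set T := {t : ℝ | t • e ≤ x} with hT
  have hT0 : (0:ℝ) ∈ T := by simp [hT, hx]
  have hTbdd : BddAbove T := aux_bddAbove he.1
  have hTclosed : IsClosed T :=
    (isClosed_Iic).preimage (continuous_id.smul continuous_const)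
  have hTne : T.Nonempty := ⟨0, hT0⟩
  set t0 := sSup T with ht0
  have ht0T : t0 ∈ T := hTclosed.csSup_mem hTne hTbdd
  have ht0nn : 0 ≤ t0 := le_csSup hTbdd hT0
  refine ⟨t0, ht0nn, ht0T, ?_⟩
  have hr : 0 ≤ x - t0 • e := sub_nonneg.2 ht0T
  have hs0 : 0 ≤ (x - t0 • e) ⊓ e := le_inf hr he.1.le
  have hse : (x - t0 • e) ⊓ e ≤ e := inf_le_right
  obtain ⟨σ, hσ⟩ := he.2 _ hs0 hse
  rcases le_or_gt σ 0 with h | h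
  · refine le_antisymm ?_ hs0
    rw [hσ]
    exact aux_smul_nonpos h he.1.le
  · exfalso
    have h1 : σ • e ≤ x - t0 • e := hσ ▸ inf_le_left
    have h2 : (t0 + σ) • e ≤ x := by
      rw [add_smul]
      have := add_le_add_right h1 (t0 • e)
      calc t0 • e + σ • e ≤ t0 • e + (x - t0 • e) := this
        _ = x := by abel
    have : t0 + σ ≤ t0 := le_csSup hTbdd h2
    linarith

lemma aux_yudin :
    ∃ (d : ℕ) (e : Fin d → E), (∀ i, 0 < e i) ∧ (∀ i j, i ≠ j → e i ⊓ e j = 0) ∧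
      Submodule.span ℝ (Set.range e) = ⊤ := by
  suffices H : ∀ (N : ℕ) (V : Submodule ℝ E), Module.finrank ℝ V ≤ N →
      (∀ x ∈ V, ∀ y : E, |y| ≤ |x| → y ∈ V) →
      ∃ (d : ℕ) (e : Fin d → E), (∀ i, 0 < e i) ∧ (∀ i j, i ≠ j → e i ⊓ e j = 0) ∧
        Submodule.span ℝ (Set.range e) = V by
    obtain ⟨d, e, h1, h2, h3⟩ := H (Module.finrank ℝ (⊤ : Submodule ℝ E)) ⊤ le_rfl
      (fun x _ y _ => Submodule.mem_top)
    exact ⟨d, e, h1, h2, h3⟩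
  intro N
  induction N with
  | zero =>
    intro V hV _
    refine ⟨0, fun i => i.elim0, fun i => i.elim0, fun i => i.elim0, ?_⟩
    rw [Set.range_eq_empty, Submodule.span_empty]
    exact (Submodule.finrank_eq_zero.mp (Nat.le_zero.mp hV)).symm
  | succ N ih =>
    intro V hV hideal
    by_cases hbot : V = ⊥
    · refine ⟨0, fun i => i.elim0, fun i => i.elim0, fun i => i.elim0, ?_⟩
      rw [Set.range_eq_empty, Submodule.span_empty]
      exact hbot.symm
    obtain ⟨x, hxV, hxne⟩ := Submodule.exists_mem_ne_zero_of_ne_bot hbot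
    have haxV : |x| ∈ V := hideal x hxV |x| (by rw [abs_abs])
    have haxpos : 0 < |x| := by
      refine lt_of_le_of_ne (abs_nonneg x) (fun h => hxne ?_)
      have h1 : x ≤ 0 := (le_abs_self x).trans h.symm.le
      have h2 : 0 ≤ x := by
        have h3 : -x ≤ |x| := by rw [abs]; exact le_sup_right
        rw [← h] at h3
        exact neg_nonpos.mp h3
      exact le_antisymm h1 h2
    obtain ⟨e0, he0, he0x⟩ := aux_atom_below haxpos
    have he0V : e0 ∈ V := hideal |x| haxV e0 (by
      rw [abs_of_nonneg he0.1.le, abs_abs]; exact he0x)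
    set V' := V ⊓ auxOrtho e0 he0.1.le with hV'
    have hV'le : V' ≤ V := inf_le_left
    have he0nV' : e0 ∉ V' := by
      intro h
      have h2 : |e0| ⊓ e0 = 0 := h.2
      rw [abs_of_nonneg he0.1.le, inf_idem] at h2
      exact he0.1.ne' h2
    have hlt : V' < V := lt_of_le_of_ne hV'le (fun h => he0nV' (h ▸ he0V))
    have hrank : Module.finrank ℝ V' < Module.finrank ℝ V :=
      Submodule.finrank_lt_finrank_of_lt hlt
    have hV'ideal : ∀ x ∈ V', ∀ y : E, |y| ≤ |x| → y ∈ V' := by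
      intro a haV' y hy
      refine ⟨hideal a (hV'le haV') y hy, ?_⟩
      show |y| ⊓ e0 = 0
      refine le_antisymm ?_ (le_inf (abs_nonneg y) he0.1.le)
      calc |y| ⊓ e0 ≤ |a| ⊓ e0 := inf_le_inf_right e0 hy
        _ = 0 := haV'.2
    obtain ⟨d, e', he'pos, he'disj, he'span⟩ := ih V' (by omega) hV'ideal
    have he'V' : ∀ i, e' i ∈ V' := by
      intro i
      rw [← he'span]
      exact Submodule.subset_span (Set.mem_range_self i)
    refine ⟨d + 1, Fin.cons e0 e', ?_, ?_, ?_⟩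
    · intro i
      refine Fin.cases ?_ ?_ i
      · exact he0.1
      · intro j; simpa using he'pos j
    · intro i j hij
      rcases Fin.eq_zero_or_eq_succ i with rfl | ⟨k, rfl⟩ <;>
        rcases Fin.eq_zero_or_eq_succ j with rfl | ⟨l, rfl⟩
      · exact absurd rfl hij
      · simp only [Fin.cons_zero, Fin.cons_succ]
        rw [inf_comm]
        have h5 : |e' l| ⊓ e0 = 0 := (he'V' l).2
        rwa [abs_of_nonneg (he'pos l).le] at h5
      · simp only [Fin.cons_zero, Fin.cons_succ]
        have h5 : |e' k| ⊓ e0 = 0 := (he'V' k).2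
        rwa [abs_of_nonneg (he'pos k).le] at h5
      · simp only [Fin.cons_succ]
        refine he'disj k l ?_
        intro h; exact hij (by rw [h])
    · rw [Fin.range_cons, Submodule.span_insert]
      apply le_antisymm
      · refine sup_le ?_ ?_
        · rw [Submodule.span_singleton_le_iff_mem]; exact he0V
        · rw [he'span]; exact hV'le
      · -- V ≤ span{e0} ⊔ V'
        intro a haV
        have hposcase : ∀ b : E, b ∈ V → 0 ≤ b →
            b ∈ Submodule.span ℝ {e0} ⊔ Submodule.span ℝ (Set.range e') := by
          intro b hbV hb
          obtain ⟨t, ht0, hte, hbt⟩ := aux_atom_decomp he0 hb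
          have h1 : t • e0 ∈ Submodule.span ℝ {e0} :=
            Submodule.smul_mem _ t (Submodule.mem_span_singleton_self e0)
          have h2 : b - t • e0 ∈ V' := by
            refine ⟨sub_mem hbV (Submodule.smul_mem _ t he0V), ?_⟩
            show |b - t • e0| ⊓ e0 = 0
            rwa [abs_of_nonneg (sub_nonneg.2 hte)]
          have h3 : b - t • e0 ∈ Submodule.span ℝ (Set.range e') := by
            rw [he'span]; exact h2
          have := Submodule.add_mem_sup h1 h3
          simpa using this
        have hpos : a⁺ ∈ V := hideal a haV _ (by
          rw [abs_of_nonneg (posPart_nonneg a)]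
          exact sup_le (le_abs_self a) (abs_nonneg a))
        have hneg : a⁻ ∈ V := hideal a haV _ (by
          rw [abs_of_nonneg (negPart_nonneg a)]
          refine sup_le ?_ (abs_nonneg a)
          rw [← abs_neg]; exact le_abs_self (-a))
        have h4 := sub_mem (hposcase _ hpos (posPart_nonneg a))
          (hposcase _ hneg (negPart_nonneg a))
        rwa [posPart_sub_negPart] at h4

end mod


section helpers
variable {A : Type*} [NormedAddCommGroup A] [Lattice A] [HasSolidNorm A] [IsOrderedAddMonoid A]

lemma aux_abs_sum_le {ι : Type*} (s : Finset ι) (f : ι → A) :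
    |∑ i ∈ s, f i| ≤ ∑ i ∈ s, |f i| := by
  induction s using Finset.cons_induction with
  | empty => simp
  | cons i s his ih =>
    rw [Finset.sum_cons, Finset.sum_cons]
    exact (abs_add_le _ _).trans (add_le_add_right ih _)

end helpers

section combo
variable {E : Type*} [NormedAddCommGroup E] [Lattice E] [HasSolidNorm E] [IsOrderedAddMonoid E] [NormedSpace ℝ E]

lemma aux_abs_combo {d : ℕ} (e : Fin d → E) (hpos : ∀ i, 0 ≤ e i)
    (hdisj : ∀ i j, i ≠ j → e i ⊓ e j = 0) (c : Fin d → ℝ) :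
    |∑ i, c i • e i| = ∑ i, |c i| • e i := by
  set u := ∑ i, (c i)⁺ • e i with hu
  set v := ∑ i, (c i)⁻ • e i with hv
  have hterm : ∀ (i j : Fin d), ((c j)⁻ • e j) ⊓ ((c i)⁺ • e i) = 0 := by
    intro i j
    rcases eq_or_ne j i with rfl | hne
    · rcases le_or_gt (c j) 0 with h | h
      · rw [posPart_eq_zero.2 h, zero_smul]
        exact inf_eq_right.2 (aux_smul_nonneg (negPart_nonneg _) (hpos j))
      · rw [negPart_eq_zero.2 h.le, zero_smul]
        exact inf_eq_left.2 (aux_smul_nonneg (posPart_nonneg _) (hpos j))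
    · exact aux_smul_disjoint (hpos j) (hpos i) (hdisj j i hne)
        (negPart_nonneg _) (posPart_nonneg _)
  have huv : u ⊓ v = 0 := by
    rw [inf_comm]
    refine aux_sum_inf_zero (fun j _ => aux_smul_nonneg (negPart_nonneg _) (hpos j))
      (Finset.sum_nonneg fun i _ => aux_smul_nonneg (posPart_nonneg _) (hpos i)) ?_
    intro j _
    rw [hu, inf_comm]
    exact aux_sum_inf_zero (fun i _ => aux_smul_nonneg (posPart_nonneg _) (hpos i))
      (aux_smul_nonneg (negPart_nonneg _) (hpos j))
      (fun i _ => by rw [inf_comm]; exact hterm i j)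
  have hsplit : ∑ i, c i • e i = u - v := by
    rw [hu, hv, ← Finset.sum_sub_distrib]
    refine Finset.sum_congr rfl fun i _ => ?_
    rw [← sub_smul, posPart_sub_negPart]
  rw [hsplit, aux_abs_sub_of_disjoint
    (Finset.sum_nonneg fun i _ => aux_smul_nonneg (posPart_nonneg _) (hpos i))
    (Finset.sum_nonneg fun i _ => aux_smul_nonneg (negPart_nonneg _) (hpos i)) huv,
    ← Finset.sum_add_distrib]
  refine Finset.sum_congr rfl fun i _ => ?_
  rw [← add_smul, posPart_add_negPart]

end combo

/-- If `E` is a finite-dimensional Banach lattice and `T : E → F` is a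
positive `ε`-strongly disjointness preserving operator, then there exists a disjointness
preserving operator `S` with `0 ≤ S ≤ T` and `‖T - S‖ ≤ 2ε`. -/
theorem stmt19 (E F : Type*)
    [NormedAddCommGroup E] [Lattice E] [HasSolidNorm E] [IsOrderedAddMonoid E] [NormedSpace ℝ E] [CompleteSpace E]
    [FiniteDimensional ℝ E]
    [NormedAddCommGroup F] [Lattice F] [HasSolidNorm F] [IsOrderedAddMonoid F] [NormedSpace ℝ F] [CompleteSpace F]
    (ε : ℝ) (hε : 0 ≤ ε) (T : E →L[ℝ] F)
    (hpos : ∀ x : E, 0 ≤ x → 0 ≤ T x)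
    (hSDP : ∀ (n : ℕ) (hn : 0 < n) (x : Fin n → E),
      (∀ i, ‖x i‖ ≤ 1) → (∀ i j, i ≠ j → |x i| ⊓ |x j| = 0) →
      ‖(∑ i, |T (x i)|) -
          (univ : Finset (Fin n)).sup' (univ_nonempty_iff.2 (Fin.pos_iff_nonempty.1 hn))
            (fun i => |T (x i)|)‖ ≤ ε) :
    ∃ S : E →L[ℝ] F,
      (∀ x y : E, |x| ⊓ |y| = 0 → |S x| ⊓ |S y| = 0) ∧
      (∀ x : E, 0 ≤ x → 0 ≤ S x) ∧
      (∀ x : E, 0 ≤ x → S x ≤ T x) ∧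
      ‖T - S‖ ≤ 2 * ε := by
  classical
  obtain ⟨d, f, hfpos, hfdisj, hfspan⟩ := aux_yudin (E := E)
  set e : Fin d → E := fun i => ‖f i‖⁻¹ • f i with he
  have hfne : ∀ i, f i ≠ 0 := fun i => (hfpos i).ne'
  have hfn : ∀ i, (0:ℝ) < ‖f i‖ := fun i => norm_pos_iff.2 (hfne i)
  have hepos : ∀ i, 0 ≤ e i := fun i => aux_smul_nonneg (by positivity) (hfpos i).le
  have hene : ∀ i, e i ≠ 0 := fun i => smul_ne_zero (inv_pos.2 (hfn i)).ne' (hfne i)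
  have henorm : ∀ i, ‖e i‖ = 1 := by
    intro i
    rw [he]
    simp only [norm_smul, Real.norm_eq_abs, abs_of_pos (inv_pos.2 (hfn i))]
    exact inv_mul_cancel₀ (hfn i).ne'
  have hedisj : ∀ i j, i ≠ j → e i ⊓ e j = 0 := fun i j hij =>
    aux_smul_disjoint (hfpos i).le (hfpos j).le (hfdisj i j hij)
      (inv_nonneg.2 (norm_nonneg _)) (inv_nonneg.2 (norm_nonneg _))
  have hespan : Submodule.span ℝ (Set.range e) = ⊤ := by
    refine le_antisymm le_top ?_
    rw [← hfspan]
    refine Submodule.span_le.2 ?_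
    rintro _ ⟨i, rfl⟩
    have hfi : f i = ‖f i‖ • e i := by
      rw [he, smul_smul, mul_inv_cancel₀ (hfn i).ne', one_smul]
    rw [hfi]
    exact Submodule.smul_mem _ _ (Submodule.subset_span ⟨i, rfl⟩)
  have habs : ∀ c : Fin d → ℝ, |∑ i, c i • e i| = ∑ i, |c i| • e i :=
    aux_abs_combo e hepos hedisj
  have hli : LinearIndependent ℝ e := by
    rw [Fintype.linearIndependent_iff]
    intro g hg i
    have h0 : ∑ j, |g j| • e j = 0 := by
      rw [← habs, hg, abs_zero]
    have h1 := (Finset.sum_eq_zero_iff_of_nonneg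
      (fun j _ => aux_smul_nonneg (abs_nonneg _) (hepos j))).1 h0 i (Finset.mem_univ i)
    rcases smul_eq_zero.1 h1 with h | h
    · exact abs_eq_zero.1 h
    · exact absurd h (hene i)
  let B : Module.Basis (Fin d) ℝ E := Module.Basis.mk hli (by rw [hespan])
  have hB : ∀ i, B i = e i := fun i => Module.Basis.mk_apply hli _ i
  set a : Fin d → F := fun i => T (e i) with ha
  have hann : ∀ i, 0 ≤ a i := fun i => hpos (e i) (hepos i)
  set b : Fin d → F := fun i => ∑ j ∈ Finset.univ.erase i, a j with hb
  have hbnn : ∀ i, 0 ≤ b i := fun i =>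
    Finset.sum_nonneg fun j _ => hann j
  set sf : Fin d → F := fun i => (a i - b i) ⊔ 0 with hsf
  have hsnn : ∀ i, 0 ≤ sf i := fun i => le_sup_right
  have hsle : ∀ i, sf i ≤ a i := fun i => sup_le (sub_le_self _ (hbnn i)) (hann i)
  have hsdisj : ∀ i j, i ≠ j → sf i ⊓ sf j = 0 := by
    intro i j hij
    have hji : a j ≤ b i :=
      Finset.single_le_sum (fun k _ => hann k) (Finset.mem_erase.2 ⟨Ne.symm hij, Finset.mem_univ j⟩)
    have hijb : a i ≤ b j :=
      Finset.single_le_sum (fun k _ => hann k) (Finset.mem_erase.2 ⟨hij, Finset.mem_univ i⟩)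
    have h1 : sf i ≤ (a i - a j) ⊔ 0 :=
      sup_le_sup_right (sub_le_sub_left hji _) 0
    have h2 : sf j ≤ (a j - a i) ⊔ 0 :=
      sup_le_sup_right (sub_le_sub_left hijb _) 0
    refine le_antisymm ?_ (le_inf (hsnn i) (hsnn j))
    calc sf i ⊓ sf j ≤ ((a i - a j) ⊔ 0) ⊓ ((a j - a i) ⊔ 0) := inf_le_inf h1 h2
      _ = (a i - a j)⁺ ⊓ (a i - a j)⁻ := by
          congr 1
          rw [negPart_def, neg_sub]
      _ = 0 := posPart_inf_negPart_eq_zero _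
  have hdiffeq : ∀ i, a i - sf i = a i ⊓ b i := by
    intro i
    have h1 : (a i - b i) ⊔ 0 = (a i ⊔ b i) - b i := by
      rw [sup_sub, sub_self]
    have h2 := inf_add_sup (a i) (b i)
    show a i - ((a i - b i) ⊔ 0) = a i ⊓ b i
    rw [h1]
    have : a i ⊓ b i + (a i ⊔ b i) = a i + b i := h2
    have h3 : a i ⊓ b i = a i + b i - (a i ⊔ b i) := by
      rw [← this]; abel
    rw [h3]; abel
  set Slin : E →ₗ[ℝ] F := Module.Basis.constr B ℝ sf with hSlin
  set S : E →L[ℝ] F := LinearMap.toContinuousLinearMap Slin with hS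
  have hSe : ∀ i, S (e i) = sf i := by
    intro i
    show Slin (e i) = sf i
    rw [← hB i, hSlin]
    exact Module.Basis.constr_basis B ℝ sf i
  have hrepr : ∀ x : E, x = ∑ i, B.repr x i • e i := by
    intro x
    conv_lhs => rw [← B.sum_repr x]
    exact Finset.sum_congr rfl fun i _ => by rw [hB]
  have hSx : ∀ x : E, S x = ∑ i, B.repr x i • sf i := by
    intro x
    conv_lhs => rw [hrepr x]
    rw [map_sum]
    exact Finset.sum_congr rfl fun i _ => by rw [map_smul, hSe]
  have hTx : ∀ x : E, T x = ∑ i, B.repr x i • a i := by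
    intro x
    conv_lhs => rw [hrepr x]
    rw [map_sum]
    exact Finset.sum_congr rfl fun i _ => by rw [map_smul]
  have habsx : ∀ x : E, |x| = ∑ i, |B.repr x i| • e i := by
    intro x
    conv_lhs => rw [hrepr x]
    exact habs _
  have hcoefpos : ∀ x : E, 0 ≤ x → ∀ i, 0 ≤ B.repr x i := by
    intro x hx i
    have h1 : ∑ j, B.repr x j • e j = ∑ j, |B.repr x j| • e j := by
      rw [← habsx x, ← hrepr x]
      exact (abs_of_nonneg hx).symm
    have h2 : ∑ j, (|B.repr x j| - B.repr x j) • e j = 0 := by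
      have : ∑ j, (|B.repr x j| - B.repr x j) • e j
          = ∑ j, |B.repr x j| • e j - ∑ j, B.repr x j • e j := by
        rw [← Finset.sum_sub_distrib]
        exact Finset.sum_congr rfl fun j _ => sub_smul _ _ _
      rw [this, ← h1, sub_self]
    have h3 := Fintype.linearIndependent_iff.1 hli _ h2 i
    have h4 : |B.repr x i| = B.repr x i := by linarith
    rw [← h4]
    exact abs_nonneg _
  have hcoefbound : ∀ (x : E) (i : Fin d), |B.repr x i| ≤ ‖x‖ := by
    intro x i
    have h1 : |B.repr x i| • e i ≤ |x| := by
      rw [habsx x]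
      exact Finset.single_le_sum
        (fun j _ => aux_smul_nonneg (abs_nonneg _) (hepos j)) (Finset.mem_univ i)
    have h2 : ‖|B.repr x i| • e i‖ ≤ ‖x‖ := by
      rw [← norm_abs_eq_norm x]
      refine norm_le_norm_of_abs_le_abs ?_
      rwa [abs_of_nonneg (aux_smul_nonneg (abs_nonneg _) (hepos i)), abs_abs]
    rwa [norm_smul, Real.norm_eq_abs, abs_abs, henorm i, mul_one] at h2
  refine ⟨S, ?_, ?_, ?_, ?_⟩
  · -- disjointness preserving
    intro x y hxy
    have hkey : ∀ i, B.repr x i = 0 ∨ B.repr y i = 0 := by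
      intro i
      set m := min |B.repr x i| |B.repr y i| with hm
      have hm0 : 0 ≤ m := le_min (abs_nonneg _) (abs_nonneg _)
      have h1 : m • e i ≤ |x| := by
        rw [habsx x]
        refine le_trans (aux_smul_le_smul (min_le_left _ _) (hepos i)) ?_
        exact Finset.single_le_sum
          (fun j _ => aux_smul_nonneg (abs_nonneg _) (hepos j)) (Finset.mem_univ i)
      have h2 : m • e i ≤ |y| := by
        rw [habsx y]
        refine le_trans (aux_smul_le_smul (min_le_right _ _) (hepos i)) ?_
        exact Finset.single_le_sum
          (fun j _ => aux_smul_nonneg (abs_nonneg _) (hepos j)) (Finset.mem_univ i)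
      have h3 : m • e i = 0 := by
        refine le_antisymm ?_ (aux_smul_nonneg hm0 (hepos i))
        rw [← hxy]
        exact le_inf h1 h2
      rcases smul_eq_zero.1 h3 with h | h
      · rcases le_total |B.repr x i| |B.repr y i| with h5 | h5
        · left; exact abs_eq_zero.1 (by rw [hm, min_eq_left h5] at h; exact h)
        · right; exact abs_eq_zero.1 (by rw [hm, min_eq_right h5] at h; exact h)
      · exact absurd h (hene i)
    have hax : |S x| ≤ ∑ i, |B.repr x i| • sf i := by
      rw [hSx x]
      refine le_trans (aux_abs_sum_le _ _) (Finset.sum_le_sum fun i _ => ?_)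
      rw [aux_abs_smul, abs_of_nonneg (hsnn i)]
    have hay : |S y| ≤ ∑ i, |B.repr y i| • sf i := by
      rw [hSx y]
      refine le_trans (aux_abs_sum_le _ _) (Finset.sum_le_sum fun i _ => ?_)
      rw [aux_abs_smul, abs_of_nonneg (hsnn i)]
    refine le_antisymm ?_ (le_inf (abs_nonneg _) (abs_nonneg _))
    calc |S x| ⊓ |S y| ≤ (∑ i, |B.repr x i| • sf i) ⊓ (∑ i, |B.repr y i| • sf i) :=
          inf_le_inf hax hay
      _ = 0 := by
          refine aux_sum_inf_zero
            (fun i _ => aux_smul_nonneg (abs_nonneg _) (hsnn i))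
            (Finset.sum_nonneg fun j _ => aux_smul_nonneg (abs_nonneg _) (hsnn j)) ?_
          intro i _
          rw [inf_comm]
          refine aux_sum_inf_zero
            (fun j _ => aux_smul_nonneg (abs_nonneg _) (hsnn j))
            (aux_smul_nonneg (abs_nonneg _) (hsnn i)) ?_
          intro j _
          rcases eq_or_ne j i with rfl | hne
          · rcases hkey j with h | h
            · rw [h, abs_zero, zero_smul]
              exact inf_eq_right.2 (aux_smul_nonneg (abs_nonneg _) (hsnn j))
            · rw [h, abs_zero, zero_smul]
              exact inf_eq_left.2 (aux_smul_nonneg (abs_nonneg _) (hsnn j))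
          · exact aux_smul_disjoint (hsnn j) (hsnn i) (hsdisj j i hne)
              (abs_nonneg _) (abs_nonneg _)
  · -- positivity
    intro x hx
    rw [hSx x]
    exact Finset.sum_nonneg fun i _ => aux_smul_nonneg (hcoefpos x hx i) (hsnn i)
  · -- S ≤ T
    intro x hx
    rw [hSx x, hTx x]
    refine Finset.sum_le_sum fun i _ => ?_
    have := aux_smul_nonneg (hcoefpos x hx i) (sub_nonneg.2 (hsle i))
    rw [smul_sub] at this
    exact sub_nonneg.1 this
  · -- norm bound
    refine ContinuousLinearMap.opNorm_le_bound _ (by linarith) ?_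
    intro x
    rcases Nat.eq_zero_or_pos d with hd | hd
    · subst hd
      have htop : (⊤ : Submodule ℝ E) = ⊥ := by
        rw [← hespan, Set.range_eq_empty, Submodule.span_empty]
      have hx0 : x = 0 := by
        have : x ∈ (⊥ : Submodule ℝ E) := htop ▸ Submodule.mem_top
        simpa using this
      rw [hx0]
      simp
    · have hne : (Finset.univ : Finset (Fin d)).Nonempty :=
        Finset.univ_nonempty_iff.2 (Fin.pos_iff_nonempty.1 hd)
      have hTS : (T - S) x = ∑ i, B.repr x i • (a i - sf i) := by
        rw [ContinuousLinearMap.sub_apply, hTx, hSx, ← Finset.sum_sub_distrib]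
        exact Finset.sum_congr rfl fun i _ => (smul_sub _ _ _).symm
      have h1 : |(T - S) x| ≤ ‖x‖ • ∑ i, (a i ⊓ b i) := by
        rw [hTS]
        refine le_trans (aux_abs_sum_le _ _) ?_
        rw [Finset.smul_sum]
        refine Finset.sum_le_sum fun i _ => ?_
        have hnn : 0 ≤ a i ⊓ b i := le_inf (hann i) (hbnn i)
        rw [aux_abs_smul, hdiffeq i, abs_of_nonneg hnn]
        exact aux_smul_le_smul (hcoefbound x i) hnn
      set A0 := ∑ i, a i with hA0
      set V := Finset.univ.sup' hne a with hV
      have hK := aux_claimK Finset.univ hne a (fun i _ => hann i)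
      have h2 : ∑ i, (a i ⊓ b i) ≤ (A0 - V) + (A0 - V) := by
        have h2a : (∑ i, (a i ⊓ b i)) + (V + V) ≤ A0 + A0 := hK
        have := sub_le_sub_right h2a (V + V)
        calc ∑ i, (a i ⊓ b i) = (∑ i, (a i ⊓ b i)) + (V + V) - (V + V) := by abel
          _ ≤ A0 + A0 - (V + V) := this
          _ = (A0 - V) + (A0 - V) := by abel
      have hAV : 0 ≤ A0 - V := by
        refine sub_nonneg.2 (Finset.sup'_le hne a fun i _ => ?_)
        exact Finset.single_le_sum (fun j _ => hann j) (Finset.mem_univ i)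
      have hsumnn : 0 ≤ ∑ i, (a i ⊓ b i) :=
        Finset.sum_nonneg fun i _ => le_inf (hann i) (hbnn i)
      have h3 : ‖∑ i, (a i ⊓ b i)‖ ≤ ‖(A0 - V) + (A0 - V)‖ := by
        refine norm_le_norm_of_abs_le_abs ?_
        rwa [abs_of_nonneg hsumnn, abs_of_nonneg (add_nonneg hAV hAV)]
      have h4 : ‖(A0 - V) + (A0 - V)‖ ≤ 2 * ε := by
        have h5 := hSDP d hd e (fun i => (henorm i).le) (fun i j hij => by
          rw [abs_of_nonneg (hepos i), abs_of_nonneg (hepos j)]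
          exact hedisj i j hij)
        have h6 : ∑ i, |T (e i)| = A0 := by
          rw [hA0]
          exact Finset.sum_congr rfl fun i _ => abs_of_nonneg (hann i)
        have h7 : (Finset.univ : Finset (Fin d)).sup'
            (Finset.univ_nonempty_iff.2 (Fin.pos_iff_nonempty.1 hd)) (fun i => |T (e i)|) = V := by
          rw [hV]
          exact Finset.sup'_congr _ rfl fun i _ => abs_of_nonneg (hann i)
        rw [h6, h7] at h5
        calc ‖(A0 - V) + (A0 - V)‖ ≤ ‖A0 - V‖ + ‖A0 - V‖ := norm_add_le _ _
          _ ≤ ε + ε := add_le_add h5 h5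
          _ = 2 * ε := by ring
      have h8 : ‖(T - S) x‖ ≤ ‖x‖ * ‖∑ i, (a i ⊓ b i)‖ := by
        have h9 : |(T - S) x| ≤ |‖x‖ • ∑ i, (a i ⊓ b i)| :=
          h1.trans (le_abs_self _)
        have h10 := norm_le_norm_of_abs_le_abs h9
        rwa [norm_smul, Real.norm_eq_abs, abs_of_nonneg (norm_nonneg x)] at h10
      calc ‖(T - S) x‖ ≤ ‖x‖ * ‖∑ i, (a i ⊓ b i)‖ := h8
        _ ≤ ‖x‖ * (2 * ε) := mul_le_mul_of_nonneg_left (h3.trans h4) (norm_nonneg x)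
        _ = 2 * ε * ‖x‖ := by ring
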